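/- For every λ ∈ 𝔫*: L_λ = {g ∈ G : gλ = λ} and S_λ = {g ∈ G : gλ ∈ Gλ ∩ λG}; consequently |S_λ|/|L_λ| = |Gλ ∩ λG| = ⟨χ_λ, χ_λ⟩_G. -/

import Mathlib

open scoped Classical BigOperators ComplexOrder

set_option linter.unusedSectionVars false
set_option linter.unusedVariables false

noncomputable section

namespace IterChar

/-! ### Generic notions for finite groups: inner product, induction, characters -/

/-- The standard inner product `⟨f,h⟩_G = |G|⁻¹ ∑_{x ∈ G} f x * conj (h x)`. -/
def innerG (G : Type) [Group G] (f h : G → ℂ) : ℂ :=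
  (Nat.card G : ℂ)⁻¹ * ∑ᶠ x : G, f x * (starRingEnd ℂ) (h x)

/-- Induction of a function from a subgroup, via the Frobenius formula. -/
def indFun {G : Type} [Group G] (H : Subgroup G) (ψ : ↥H → ℂ) : G → ℂ :=
  fun g => (Nat.card ↥H : ℂ)⁻¹ *
    ∑ᶠ x : G, if h : x * g * x⁻¹ ∈ H then ψ ⟨x * g * x⁻¹, h⟩ else 0

/-- A function `G → ℂ` is a character if it is the trace character of some
finite-dimensional complex representation. -/
def IsCharacter (G : Type) [Group G] (f : G → ℂ) : Prop :=
  ∃ V : FDRep ℂ G, f = FDRep.character V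

/-- The set of irreducible characters of `G`: characters of norm one. -/
def Irr (G : Type) [Group G] : Set (G → ℂ) :=
  {f | IsCharacter G f ∧ innerG G f f = 1}

/-- The set of irreducible constituents of `χ`: irreducible characters with
`⟨χ, ψ⟩_G > 0` (using the complex partial order). -/
def IrrConstituents (G : Type) [Group G] (χ : G → ℂ) : Set (G → ℂ) :=
  {f | f ∈ Irr G ∧ 0 < innerG G χ f}

/-! ### Algebra groups -/

variable {F : Type} [Field F] [Fintype F] {R : Type} [Ring R] [Algebra F R] [Fintype R]

/-- `J` is a nilpotent (non-unital) subalgebra: all products of some fixed length vanish. -/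
def IsNil (J : NonUnitalSubalgebra F R) : Prop :=
  ∃ N : ℕ, ∀ l : List R, (∀ x ∈ l, x ∈ J) → l.length = N → l.prod = 0

/-- The algebra group `G = 1 + J` of a (nilpotent) subalgebra `J ⊆ R`, realized as the
subgroup of units `u` of `R` with `u - 1 ∈ J` (and `u⁻¹ - 1 ∈ J`, which is automatic
when `J` is nilpotent). -/
def algGroup (F : Type) [Field F] [Fintype F] (R : Type) [Ring R] [Algebra F R] [Fintype R]
    (J : NonUnitalSubalgebra F R) : Subgroup Rˣ where
  carrier := {u : Rˣ | ((u : R) - 1 ∈ J) ∧ (((u⁻¹ : Rˣ) : R) - 1 ∈ J)}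
  one_mem' := by
    constructor <;> · simp only [Units.val_one, inv_one, sub_self]; exact J.zero_mem
  mul_mem' := by
    rintro u v ⟨hu1, hu2⟩ ⟨hv1, hv2⟩
    constructor
    · have h : ((u * v : Rˣ) : R) - 1 =
          ((u : R) - 1) * ((v : R) - 1) + ((u : R) - 1) + ((v : R) - 1) := by
        push_cast; noncomm_ring
      rw [h]
      exact add_mem (add_mem (mul_mem hu1 hv1) hu1) hv1
    · have h : (((u * v)⁻¹ : Rˣ) : R) - 1 =
          (((v⁻¹ : Rˣ) : R) - 1) * (((u⁻¹ : Rˣ) : R) - 1) +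
            (((v⁻¹ : Rˣ) : R) - 1) + (((u⁻¹ : Rˣ) : R) - 1) := by
        rw [mul_inv_rev]; push_cast; noncomm_ring
      rw [h]
      exact add_mem (add_mem (mul_mem hv2 hu2) hv2) hu2
  inv_mem' := by
    rintro u ⟨h1, h2⟩
    exact ⟨h2, by simpa using h1⟩

theorem mem_algGroup {J : NonUnitalSubalgebra F R} {u : Rˣ} :
    u ∈ algGroup F R J ↔ ((u : R) - 1 ∈ J) ∧ (((u⁻¹ : Rˣ) : R) - 1 ∈ J) :=
  Iff.rfl

/-- The element `X ∈ J` such that `g = 1 + X`. -/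
def gElt {J : NonUnitalSubalgebra F R} (g : ↥(algGroup F R J)) : ↥J :=
  ⟨((g : Rˣ) : R) - 1, g.2.1⟩

/-- The function `θ_λ(1+X) = θ(λ(X))` on the algebra group `1 + J`. -/
def thetaFn (θ : AddChar F ℂ) (J : NonUnitalSubalgebra F R) (lam : ↥J →ₗ[F] F) :
    ↥(algGroup F R J) → ℂ :=
  fun g => θ (lam (gElt g))

/-- Left multiplication by the group element `g` as a linear endomorphism of `J`. -/
def lmulMap {J : NonUnitalSubalgebra F R} (g : ↥(algGroup F R J)) : ↥J →ₗ[F] ↥J where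
  toFun X := ⟨((g : Rˣ) : R) * (X : R), by
    have h : ((g : Rˣ) : R) * (X : R) = (((g : Rˣ) : R) - 1) * (X : R) + (X : R) := by
      noncomm_ring
    rw [h]; exact add_mem (mul_mem g.2.1 X.2) X.2⟩
  map_add' X Y := by ext; simp [mul_add]
  map_smul' c X := by ext; simp [mul_smul_comm]

/-- Right multiplication by the group element `g` as a linear endomorphism of `J`. -/
def rmulMap {J : NonUnitalSubalgebra F R} (g : ↥(algGroup F R J)) : ↥J →ₗ[F] ↥J where
  toFun X := ⟨(X : R) * ((g : Rˣ) : R), by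
    have h : (X : R) * ((g : Rˣ) : R) = (X : R) * (((g : Rˣ) : R) - 1) + (X : R) := by
      noncomm_ring
    rw [h]; exact add_mem (mul_mem X.2 g.2.1) X.2⟩
  map_add' X Y := by ext; simp [add_mul]
  map_smul' c X := by ext; simp [smul_mul_assoc]

/-- The left action of `G` on the dual space: `(gλ)(X) = λ(g⁻¹ X)`. -/
def leftAct {J : NonUnitalSubalgebra F R} (g : ↥(algGroup F R J)) (lam : ↥J →ₗ[F] F) :
    ↥J →ₗ[F] F :=
  lam.comp (lmulMap g⁻¹)

/-- The right action of `G` on the dual space: `(λg)(X) = λ(X g⁻¹)`. -/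
def rightAct {J : NonUnitalSubalgebra F R} (g : ↥(algGroup F R J)) (lam : ↥J →ₗ[F] F) :
    ↥J →ₗ[F] F :=
  lam.comp (rmulMap g⁻¹)

/-- The coadjoint action of `G` on the dual space: `λ^g(X) = λ(g X g⁻¹)`. -/
def coAct {J : NonUnitalSubalgebra F R} (g : ↥(algGroup F R J)) (lam : ↥J →ₗ[F] F) :
    ↥J →ₗ[F] F :=
  lam.comp ((lmulMap g).comp (rmulMap g⁻¹))

/-- The left orbit `Gλ`. -/
def leftOrbit (J : NonUnitalSubalgebra F R) (lam : ↥J →ₗ[F] F) : Set (↥J →ₗ[F] F) :=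
  Set.range fun g : ↥(algGroup F R J) => leftAct g lam

/-- The right orbit `λG`. -/
def rightOrbit (J : NonUnitalSubalgebra F R) (lam : ↥J →ₗ[F] F) : Set (↥J →ₗ[F] F) :=
  Set.range fun g : ↥(algGroup F R J) => rightAct g lam

/-- The two-sided orbit `GλG`. -/
def twoOrbit (J : NonUnitalSubalgebra F R) (lam : ↥J →ₗ[F] F) : Set (↥J →ₗ[F] F) :=
  {mu | ∃ g h : ↥(algGroup F R J), mu = leftAct g (rightAct h lam)}

/-- The coadjoint orbit `λ^G`. -/
def coOrbit (J : NonUnitalSubalgebra F R) (lam : ↥J →ₗ[F] F) : Set (↥J →ₗ[F] F) :=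
  Set.range fun g : ↥(algGroup F R J) => coAct g lam

/-- The right orbit of `λ` under a subgroup `H` of the algebra group. -/
def rightOrbitUnder (J : NonUnitalSubalgebra F R) (H : Subgroup ↥(algGroup F R J))
    (lam : ↥J →ₗ[F] F) : Set (↥J →ₗ[F] F) :=
  {mu | ∃ s ∈ H, mu = rightAct s lam}

/-- The Kirillov function `ψ_λ = |λ^G|^{-1/2} ∑_{μ ∈ λ^G} θ_μ`. -/
def kirillov (θ : AddChar F ℂ) (J : NonUnitalSubalgebra F R) (lam : ↥J →ₗ[F] F) :
    ↥(algGroup F R J) → ℂ :=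
  fun g => ((Real.sqrt (Nat.card ↥(coOrbit J lam)) : ℂ))⁻¹ *
    ∑ᶠ mu ∈ coOrbit J lam, thetaFn θ J mu g

/-- The supercharacter `χ_λ = (|Gλ|/|GλG|) ∑_{μ ∈ GλG} θ_μ`. -/
def superchar (θ : AddChar F ℂ) (J : NonUnitalSubalgebra F R) (lam : ↥J →ₗ[F] F) :
    ↥(algGroup F R J) → ℂ :=
  fun g => ((Nat.card ↥(leftOrbit J lam) : ℂ) / (Nat.card ↥(twoOrbit J lam) : ℂ)) *
    ∑ᶠ mu ∈ twoOrbit J lam, thetaFn θ J mu g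

/-! ### The subalgebras `𝔩_λ`, `𝔰_λ` and their iterates -/

/-- The extension of `λ : J → F` by zero to all of `R`. -/
def lamE (J : NonUnitalSubalgebra F R) (lam : ↥J →ₗ[F] F) (x : R) : F :=
  if h : x ∈ J then lam ⟨x, h⟩ else 0

theorem lamE_apply (J : NonUnitalSubalgebra F R) (lam : ↥J →ₗ[F] F) {x : R} (hx : x ∈ J) :
    lamE J lam x = lam ⟨x, hx⟩ := dif_pos hx

theorem lamE_zero (J : NonUnitalSubalgebra F R) (lam : ↥J →ₗ[F] F) : lamE J lam 0 = 0 := by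
  rw [lamE_apply J lam J.zero_mem]
  have h : (⟨(0 : R), J.zero_mem⟩ : ↥J) = 0 := Subtype.ext rfl
  rw [h, map_zero]

theorem lamE_add (J : NonUnitalSubalgebra F R) (lam : ↥J →ₗ[F] F) {x y : R}
    (hx : x ∈ J) (hy : y ∈ J) : lamE J lam (x + y) = lamE J lam x + lamE J lam y := by
  rw [lamE, lamE, lamE, dif_pos (add_mem hx hy), dif_pos hx, dif_pos hy]
  have h : (⟨x + y, add_mem hx hy⟩ : ↥J) = ⟨x, hx⟩ + ⟨y, hy⟩ := Subtype.ext rfl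
  rw [h, map_add]

theorem lamE_smul (J : NonUnitalSubalgebra F R) (lam : ↥J →ₗ[F] F) (c : F) {x : R}
    (hx : x ∈ J) : lamE J lam (c • x) = c * lamE J lam x := by
  rw [lamE, lamE, dif_pos (SMulMemClass.smul_mem c hx), dif_pos hx]
  have h : (⟨c • x, SMulMemClass.smul_mem c hx⟩ : ↥J) = c • ⟨x, hx⟩ := Subtype.ext rfl
  rw [h, map_smul]
  rfl

/-- The left kernel `𝔩` of the bilinear form `(X,Y) ↦ λ(XY)` restricted to `s × s`. -/
def lStep (J : NonUnitalSubalgebra F R) (lam : ↥J →ₗ[F] F)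
    (s : NonUnitalSubalgebra F R) (hs : s ≤ J) : NonUnitalSubalgebra F R where
  carrier := {x | x ∈ s ∧ ∀ y ∈ s, lamE J lam (x * y) = 0}
  zero_mem' := ⟨zero_mem s, fun y _ => by rw [zero_mul, lamE_zero]⟩
  add_mem' := by
    rintro a b ⟨ha1, ha2⟩ ⟨hb1, hb2⟩
    refine ⟨add_mem ha1 hb1, fun y hy => ?_⟩
    rw [add_mul, lamE_add J lam (J.mul_mem (hs ha1) (hs hy)) (J.mul_mem (hs hb1) (hs hy)),
      ha2 y hy, hb2 y hy, add_zero]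
  smul_mem' := by
    rintro c a ⟨ha1, ha2⟩
    refine ⟨SMulMemClass.smul_mem c ha1, fun y hy => ?_⟩
    rw [smul_mul_assoc, lamE_smul J lam c (J.mul_mem (hs ha1) (hs hy)), ha2 y hy, mul_zero]
  mul_mem' := by
    rintro a b ⟨ha1, ha2⟩ ⟨hb1, hb2⟩
    refine ⟨mul_mem ha1 hb1, fun y hy => ?_⟩
    rw [mul_assoc]
    exact ha2 (b * y) (mul_mem hb1 hy)

theorem lStep_le (J : NonUnitalSubalgebra F R) (lam : ↥J →ₗ[F] F)
    (s : NonUnitalSubalgebra F R) (hs : s ≤ J) : lStep J lam s hs ≤ s :=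
  fun _ hx => hx.1

/-- The left kernel `𝔰` of the bilinear form `(X,Y) ↦ λ(XY)` restricted to `s × 𝔩`. -/
def sStep (J : NonUnitalSubalgebra F R) (lam : ↥J →ₗ[F] F)
    (s : NonUnitalSubalgebra F R) (hs : s ≤ J) : NonUnitalSubalgebra F R where
  carrier := {x | x ∈ s ∧ ∀ y ∈ lStep J lam s hs, lamE J lam (x * y) = 0}
  zero_mem' := ⟨zero_mem s, fun y _ => by rw [zero_mul, lamE_zero]⟩
  add_mem' := by
    rintro a b ⟨ha1, ha2⟩ ⟨hb1, hb2⟩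
    refine ⟨add_mem ha1 hb1, fun y hy => ?_⟩
    rw [add_mul, lamE_add J lam (J.mul_mem (hs ha1) (hs hy.1)) (J.mul_mem (hs hb1) (hs hy.1)),
      ha2 y hy, hb2 y hy, add_zero]
  smul_mem' := by
    rintro c a ⟨ha1, ha2⟩
    refine ⟨SMulMemClass.smul_mem c ha1, fun y hy => ?_⟩
    rw [smul_mul_assoc, lamE_smul J lam c (J.mul_mem (hs ha1) (hs hy.1)), ha2 y hy, mul_zero]
  mul_mem' := by
    rintro a b ⟨ha1, ha2⟩ ⟨hb1, hb2⟩
    refine ⟨mul_mem ha1 hb1, fun y hy => ?_⟩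
    rw [mul_assoc]
    refine ha2 (b * y) ⟨mul_mem hb1 hy.1, fun z hz => ?_⟩
    rw [mul_assoc]
    refine hb2 (y * z) ⟨mul_mem hy.1 hz, fun w hw => ?_⟩
    rw [mul_assoc]
    exact hy.2 (z * w) (mul_mem hz hw)

theorem sStep_le (J : NonUnitalSubalgebra F R) (lam : ↥J →ₗ[F] F)
    (s : NonUnitalSubalgebra F R) (hs : s ≤ J) : sStep J lam s hs ≤ s :=
  fun _ hx => hx.1

/-- `𝔩_λ`: the left kernel of `(X,Y) ↦ λ(XY)` on `J × J`. -/
def lone (J : NonUnitalSubalgebra F R) (lam : ↥J →ₗ[F] F) : NonUnitalSubalgebra F R :=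
  lStep J lam J le_rfl

/-- `𝔰_λ`: the left kernel of `(X,Y) ↦ λ(XY)` on `J × 𝔩_λ`. -/
def sone (J : NonUnitalSubalgebra F R) (lam : ↥J →ₗ[F] F) : NonUnitalSubalgebra F R :=
  sStep J lam J le_rfl

theorem lone_le (J : NonUnitalSubalgebra F R) (lam : ↥J →ₗ[F] F) : lone J lam ≤ J :=
  lStep_le J lam J le_rfl

theorem sone_le (J : NonUnitalSubalgebra F R) (lam : ↥J →ₗ[F] F) : sone J lam ≤ J :=
  sStep_le J lam J le_rfl

/-- `𝔨_λ = 𝔩_λ ∩ ker λ`. -/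
def kone (J : NonUnitalSubalgebra F R) (lam : ↥J →ₗ[F] F) : NonUnitalSubalgebra F R where
  carrier := {x | x ∈ lone J lam ∧ lamE J lam x = 0}
  zero_mem' := ⟨zero_mem _, lamE_zero J lam⟩
  add_mem' := by
    rintro a b ⟨ha1, ha2⟩ ⟨hb1, hb2⟩
    exact ⟨add_mem ha1 hb1, by
      rw [lamE_add J lam (lone_le J lam ha1) (lone_le J lam hb1), ha2, hb2, add_zero]⟩
  smul_mem' := by
    rintro c a ⟨ha1, ha2⟩
    exact ⟨SMulMemClass.smul_mem c ha1, by
      rw [lamE_smul J lam c (lone_le J lam ha1), ha2, mul_zero]⟩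
  mul_mem' := by
    rintro a b ⟨ha1, ha2⟩ ⟨hb1, hb2⟩
    exact ⟨mul_mem ha1 hb1, ha1.2 b (lone_le J lam hb1)⟩

theorem kone_le (J : NonUnitalSubalgebra F R) (lam : ↥J →ₗ[F] F) : kone J lam ≤ lone J lam :=
  fun _ hx => hx.1

/-- The descending chain `𝔰_λ^0 ⊇ 𝔰_λ^1 ⊇ ⋯` (bundled with the proof `𝔰_λ^i ≤ J`). -/
def sChainAux (J : NonUnitalSubalgebra F R) (lam : ↥J →ₗ[F] F) :
    ℕ → {s : NonUnitalSubalgebra F R // s ≤ J}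
  | 0 => ⟨J, le_rfl⟩
  | n + 1 =>
    ⟨sStep J lam (sChainAux J lam n).1 (sChainAux J lam n).2,
      le_trans (sStep_le J lam (sChainAux J lam n).1 (sChainAux J lam n).2)
        (sChainAux J lam n).2⟩

/-- `𝔰_λ^i`. -/
def sChain (J : NonUnitalSubalgebra F R) (lam : ↥J →ₗ[F] F) (i : ℕ) :
    NonUnitalSubalgebra F R :=
  (sChainAux J lam i).1

/-- `𝔩_λ^{i+1}`. -/
def lChain (J : NonUnitalSubalgebra F R) (lam : ↥J →ₗ[F] F) (i : ℕ) :
    NonUnitalSubalgebra F R :=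
  lStep J lam (sChainAux J lam i).1 (sChainAux J lam i).2

/-- The terminal element `𝔰̄_λ` of the descending chain; the chain has stabilized by
stage `|R|` since it is a weakly decreasing chain of subalgebras of the finite algebra. -/
def sbar (J : NonUnitalSubalgebra F R) (lam : ↥J →ₗ[F] F) : NonUnitalSubalgebra F R :=
  sChain J lam (Fintype.card R)

theorem sbar_le (J : NonUnitalSubalgebra F R) (lam : ↥J →ₗ[F] F) : sbar J lam ≤ J :=
  (sChainAux J lam (Fintype.card R)).2

/-- The terminal element `𝔩̄_λ` of the ascending chain. -/
def lbar (J : NonUnitalSubalgebra F R) (lam : ↥J →ₗ[F] F) : NonUnitalSubalgebra F R :=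
  lStep J lam (sbar J lam) (sbar_le J lam)

theorem lbar_le (J : NonUnitalSubalgebra F R) (lam : ↥J →ₗ[F] F) : lbar J lam ≤ J :=
  le_trans (lStep_le J lam _ _) (sbar_le J lam)

/-! ### Algebra subgroups of an algebra group -/

/-- The algebra subgroup `1 + k` of `1 + J`, as a subgroup of the ambient algebra group. -/
def algSubgroup (k J : NonUnitalSubalgebra F R) : Subgroup ↥(algGroup F R J) :=
  (algGroup F R k).subgroupOf (algGroup F R J)

/-- `L_λ = 1 + 𝔩_λ` as a subgroup of `G`. -/
def Lgrp (J : NonUnitalSubalgebra F R) (lam : ↥J →ₗ[F] F) : Subgroup ↥(algGroup F R J) :=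
  algSubgroup (lone J lam) J

/-- `S_λ = 1 + 𝔰_λ` as a subgroup of `G`. -/
def Sgrp (J : NonUnitalSubalgebra F R) (lam : ↥J →ₗ[F] F) : Subgroup ↥(algGroup F R J) :=
  algSubgroup (sone J lam) J

/-- `L̄_λ = 1 + 𝔩̄_λ` as a subgroup of `G`. -/
def Lbarg (J : NonUnitalSubalgebra F R) (lam : ↥J →ₗ[F] F) : Subgroup ↥(algGroup F R J) :=
  algSubgroup (lbar J lam) J

/-- `S̄_λ = 1 + 𝔰̄_λ` as a subgroup of `G`. -/
def Sbarg (J : NonUnitalSubalgebra F R) (lam : ↥J →ₗ[F] F) : Subgroup ↥(algGroup F R J) :=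
  algSubgroup (sbar J lam) J

/-- Passing from an element of the subgroup `1 + k ≤ 1 + J` to an element of the
algebra group `1 + k` in its own right. -/
def toAlg {k J : NonUnitalSubalgebra F R} (x : ↥(algSubgroup k J)) : ↥(algGroup F R k) :=
  ⟨((x : ↥(algGroup F R J)) : Rˣ), Subgroup.mem_subgroupOf.mp x.2⟩

/-- The linear inclusion of a smaller subalgebra. -/
def inclMap {s J : NonUnitalSubalgebra F R} (h : s ≤ J) : ↥s →ₗ[F] ↥J where
  toFun x := ⟨(x : R), h x.2⟩
  map_add' x y := rfl
  map_smul' c x := rfl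

/-- Restriction of a functional on `J` to a smaller subalgebra. -/
def resTo {s J : NonUnitalSubalgebra F R} (h : s ≤ J) (lam : ↥J →ₗ[F] F) : ↥s →ₗ[F] F :=
  lam.comp (inclMap h)

/-- The character `ξ_λ = Ind_{L̄_λ}^G (θ_λ)`. -/
def xi (θ : AddChar F ℂ) (J : NonUnitalSubalgebra F R) (lam : ↥J →ₗ[F] F) :
    ↥(algGroup F R J) → ℂ :=
  indFun (Lbarg J lam) (fun x => thetaFn θ J lam ↑x)

/-- The set `Ξ_λ = {g λ s g⁻¹ : g ∈ G, s ∈ S̄_λ}`. -/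
def Xi (J : NonUnitalSubalgebra F R) (lam : ↥J →ₗ[F] F) : Set (↥J →ₗ[F] F) :=
  {nu | ∃ g : ↥(algGroup F R J), ∃ s ∈ Sbarg J lam, nu = coAct g (rightAct s lam)}

/-! ### Normality of algebra subgroups coming from ideals -/

theorem conj_mem_aux (s a : NonUnitalSubalgebra F R)
    (hl : ∀ x ∈ s, ∀ y ∈ a, x * y ∈ a) (hr : ∀ y ∈ a, ∀ x ∈ s, y * x ∈ a)
    (u : Rˣ) (hu1 : (u : R) - 1 ∈ s) (hu2 : ((u⁻¹ : Rˣ) : R) - 1 ∈ s)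
    (x : Rˣ) (hx : (x : R) - 1 ∈ a) : ((u * x * u⁻¹ : Rˣ) : R) - 1 ∈ a := by
  have h1 : (u : R) * ((u⁻¹ : Rˣ) : R) = 1 := Units.mul_inv u
  have key : ((u * x * u⁻¹ : Rˣ) : R) - 1 =
      ((u : R) - 1) * ((x : R) - 1) * (((u⁻¹ : Rˣ) : R) - 1) +
        ((u : R) - 1) * ((x : R) - 1) + ((x : R) - 1) * (((u⁻¹ : Rˣ) : R) - 1) +
        ((x : R) - 1) := by
    push_cast
    calc (u : R) * (x : R) * ((u⁻¹ : Rˣ) : R) - 1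
        = (u : R) * (x : R) * ((u⁻¹ : Rˣ) : R) - (u : R) * ((u⁻¹ : Rˣ) : R) := by rw [h1]
      _ = _ := by noncomm_ring
  rw [key]
  exact add_mem (add_mem (add_mem (hr _ (hl _ hu1 _ hx) _ hu2) (hl _ hu1 _ hx))
    (hr _ hx _ hu2)) hx

theorem algSubgroup_normal (s a : NonUnitalSubalgebra F R)
    (hl : ∀ x ∈ s, ∀ y ∈ a, x * y ∈ a) (hr : ∀ y ∈ a, ∀ x ∈ s, y * x ∈ a) :
    ((algGroup F R a).subgroupOf (algGroup F R s)).Normal := by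
  constructor
  intro n hn g
  rw [Subgroup.mem_subgroupOf] at hn ⊢
  have hginv : ((g⁻¹ : ↥(algGroup F R s)) : Rˣ) = ((g : Rˣ))⁻¹ := rfl
  have hcoe : ((g * n * g⁻¹ : ↥(algGroup F R s)) : Rˣ) = (g : Rˣ) * (n : Rˣ) * ((g : Rˣ))⁻¹ := by
    push_cast [hginv]; rfl
  rw [mem_algGroup]
  constructor
  · rw [hcoe]
    exact conj_mem_aux s a hl hr (g : Rˣ) (g : ↥(algGroup F R s)).2.1 (g : ↥(algGroup F R s)).2.2
      (n : Rˣ) hn.1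
  · have hinv : (((g * n * g⁻¹ : ↥(algGroup F R s)) : Rˣ))⁻¹ =
        (g : Rˣ) * ((n : Rˣ))⁻¹ * ((g : Rˣ))⁻¹ := by
      rw [hcoe]; group
    rw [hinv]
    exact conj_mem_aux s a hl hr (g : Rˣ) (g : ↥(algGroup F R s)).2.1 (g : ↥(algGroup F R s)).2.2
      ((n : Rˣ))⁻¹ hn.2

theorem lone_mul_mem (J : NonUnitalSubalgebra F R) (lam : ↥J →ₗ[F] F)
    {y z : R} (hy : y ∈ lone J lam) (hz : z ∈ J) : y * z ∈ lone J lam := by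
  refine ⟨J.mul_mem (lone_le J lam hy) hz, fun w hw => ?_⟩
  rw [mul_assoc]
  exact hy.2 (z * w) (J.mul_mem hz hw)

theorem sone_mul_lone_mem (J : NonUnitalSubalgebra F R) (lam : ↥J →ₗ[F] F)
    {x y : R} (hx : x ∈ sone J lam) (hy : y ∈ lone J lam) : x * y ∈ lone J lam := by
  refine ⟨J.mul_mem (sone_le J lam hx) (lone_le J lam hy), fun w hw => ?_⟩
  rw [mul_assoc]
  exact hx.2 (y * w) (lone_mul_mem J lam hy hw)

theorem kone_ideal_left (J : NonUnitalSubalgebra F R) (lam : ↥J →ₗ[F] F) :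
    ∀ x ∈ sone J lam, ∀ y ∈ kone J lam, x * y ∈ kone J lam := by
  intro x hx y hy
  exact ⟨sone_mul_lone_mem J lam hx hy.1, hx.2 y hy.1⟩

theorem kone_ideal_right (J : NonUnitalSubalgebra F R) (lam : ↥J →ₗ[F] F) :
    ∀ y ∈ kone J lam, ∀ x ∈ sone J lam, y * x ∈ kone J lam := by
  intro y hy x hx
  exact ⟨lone_mul_mem J lam hy.1 (sone_le J lam hx), hy.1.2 x (sone_le J lam hx)⟩

/-- `K_λ = 1 + 𝔨_λ` as a (normal) subgroup of `S_λ = 1 + 𝔰_λ`. -/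
def KgrpIn (J : NonUnitalSubalgebra F R) (lam : ↥J →ₗ[F] F) :
    Subgroup ↥(algGroup F R (sone J lam)) :=
  (algGroup F R (kone J lam)).subgroupOf (algGroup F R (sone J lam))

instance KgrpIn_normal (J : NonUnitalSubalgebra F R) (lam : ↥J →ₗ[F] F) :
    (KgrpIn J lam).Normal :=
  algSubgroup_normal (sone J lam) (kone J lam) (kone_ideal_left J lam) (kone_ideal_right J lam)

/-- `L_λ = 1 + 𝔩_λ` as a (normal) subgroup of `S_λ = 1 + 𝔰_λ`. -/
def LgrpIn (J : NonUnitalSubalgebra F R) (lam : ↥J →ₗ[F] F) :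
    Subgroup ↥(algGroup F R (sone J lam)) :=
  (algGroup F R (lone J lam)).subgroupOf (algGroup F R (sone J lam))

instance LgrpIn_normal (J : NonUnitalSubalgebra F R) (lam : ↥J →ₗ[F] F) :
    (LgrpIn J lam).Normal :=
  algSubgroup_normal (sone J lam) (lone J lam)
    (fun x hx y hy => sone_mul_lone_mem J lam hx hy)
    (fun y hy x hx => lone_mul_mem J lam hy (sone_le J lam hx))


/-! ### Auxiliary material for the proof -/

section ProofAux

variable {J : NonUnitalSubalgebra F R}

theorem pow_eq_zero_of_isNil (hJ : IsNil J) {x : R} (hx : x ∈ J) : ∃ N : ℕ, x ^ N = 0 := by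
  obtain ⟨N, hN⟩ := hJ
  refine ⟨N, ?_⟩
  have := hN (List.replicate N x) (fun y hy => by
    rw [List.eq_of_mem_replicate hy]; exact hx) List.length_replicate
  simpa [List.prod_replicate] using this

theorem pow_succ_mem (k : NonUnitalSubalgebra F R) {x : R} (hx : x ∈ k) :
    ∀ i : ℕ, x ^ (i + 1) ∈ k
  | 0 => by simpa using hx
  | (i + 1) => by rw [pow_succ]; exact mul_mem (pow_succ_mem k hx i) hx

theorem exists_inv_series (hJ : IsNil J) (k : NonUnitalSubalgebra F R) {x : R}
    (hxJ : x ∈ J) (hxk : x ∈ k) :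
    ∃ y, y ∈ k ∧ y ∈ J ∧ (1 + x) * (1 + y) = 1 ∧ (1 + y) * (1 + x) = 1 := by
  obtain ⟨N, hN⟩ := pow_eq_zero_of_isNil hJ hxJ
  have hxN : (-x) ^ (N + 1) = 0 := by
    have hx1 : x ^ (N + 1) = 0 := by rw [pow_succ, hN, zero_mul]
    rw [neg_pow, hx1, mul_zero]
  refine ⟨∑ i ∈ Finset.range N, (-x) ^ (i + 1), ?_, ?_, ?_, ?_⟩
  · exact sum_mem fun i _ => pow_succ_mem k (neg_mem hxk) i
  · exact sum_mem fun i _ => pow_succ_mem J (neg_mem hxJ) i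
  · have hS : (1 : R) + ∑ i ∈ Finset.range N, (-x) ^ (i + 1) =
        ∑ i ∈ Finset.range (N + 1), (-x) ^ i := by
      rw [Finset.sum_range_succ']
      simp [add_comm]
    calc (1 + x) * (1 + ∑ i ∈ Finset.range N, (-x) ^ (i + 1))
        = -(((-x) - 1) * ∑ i ∈ Finset.range (N + 1), (-x) ^ i) := by rw [← hS]; noncomm_ring
      _ = -((-x) ^ (N + 1) - 1) := by rw [mul_geom_sum]
      _ = 1 := by rw [hxN]; noncomm_ring
  · have hS : (1 : R) + ∑ i ∈ Finset.range N, (-x) ^ (i + 1) =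
        ∑ i ∈ Finset.range (N + 1), (-x) ^ i := by
      rw [Finset.sum_range_succ']
      simp [add_comm]
    calc (1 + ∑ i ∈ Finset.range N, (-x) ^ (i + 1)) * (1 + x)
        = -((∑ i ∈ Finset.range (N + 1), (-x) ^ i) * ((-x) - 1)) := by rw [← hS]; noncomm_ring
      _ = -((-x) ^ (N + 1) - 1) := by rw [geom_sum_mul]
      _ = 1 := by rw [hxN]; noncomm_ring

/-- The unit `1 + x` for `x` in the nilpotent algebra. -/
def mkUnit (hJ : IsNil J) {x : R} (hx : x ∈ J) : Rˣ :=
  ⟨1 + x, 1 + Classical.choose (exists_inv_series hJ J hx hx),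
    (Classical.choose_spec (exists_inv_series hJ J hx hx)).2.2.1,
    (Classical.choose_spec (exists_inv_series hJ J hx hx)).2.2.2⟩

theorem mkUnit_val (hJ : IsNil J) {x : R} (hx : x ∈ J) :
    ((mkUnit hJ hx : Rˣ) : R) = 1 + x := rfl

theorem mkUnit_inv_val (hJ : IsNil J) {x : R} (hx : x ∈ J) :
    (((mkUnit hJ hx)⁻¹ : Rˣ) : R) =
      1 + Classical.choose (exists_inv_series hJ J hx hx) := rfl

/-- The element `1 + x` of the algebra group. -/
def mkG (hJ : IsNil J) {x : R} (hx : x ∈ J) : ↥(algGroup F R J) :=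
  ⟨mkUnit hJ hx, by
    constructor
    · rw [mkUnit_val]; simpa using hx
    · rw [mkUnit_inv_val]
      simpa using (Classical.choose_spec (exists_inv_series hJ J hx hx)).2.1⟩

theorem gElt_mkG (hJ : IsNil J) {x : R} (hx : x ∈ J) : gElt (mkG hJ hx) = ⟨x, hx⟩ := by
  apply Subtype.ext
  show ((mkUnit hJ hx : Rˣ) : R) - 1 = x
  rw [mkUnit_val]; noncomm_ring

/-- The bijection `g ↦ g - 1` between the algebra group and the algebra. -/
def equivJ (hJ : IsNil J) : ↥(algGroup F R J) ≃ ↥J where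
  toFun := gElt
  invFun X := mkG hJ X.2
  left_inv g := by
    apply Subtype.ext
    apply Units.ext
    show (1 : R) + (((g : Rˣ) : R) - 1) = ((g : Rˣ) : R)
    noncomm_ring
  right_inv X := gElt_mkG hJ X.2

theorem inv_sub_one_mem (hJ : IsNil J) (k : NonUnitalSubalgebra F R)
    {g : ↥(algGroup F R J)} (h : ((g : Rˣ) : R) - 1 ∈ k) :
    ((((g : Rˣ))⁻¹ : Rˣ) : R) - 1 ∈ k := by
  obtain ⟨y, hyk, hyJ, hy1, hy2⟩ := exists_inv_series hJ k g.2.1 h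
  have hg : (1 : R) + (((g : Rˣ) : R) - 1) = ((g : Rˣ) : R) := by noncomm_ring
  rw [hg] at hy1 hy2
  have hinv : ((((g : Rˣ))⁻¹ : Rˣ) : R) = 1 + y := by
    calc ((((g : Rˣ))⁻¹ : Rˣ) : R)
        = ((((g : Rˣ))⁻¹ : Rˣ) : R) * (((g : Rˣ) : R) * (1 + y)) := by rw [hy1, mul_one]
      _ = (((((g : Rˣ))⁻¹ : Rˣ) : R) * ((g : Rˣ) : R)) * (1 + y) := by rw [mul_assoc]
      _ = 1 + y := by rw [Units.inv_mul, one_mul]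
  rw [hinv]
  simpa using hyk

theorem mem_algSubgroup_iff (hJ : IsNil J) (k : NonUnitalSubalgebra F R)
    (g : ↥(algGroup F R J)) : g ∈ algSubgroup k J ↔ ((g : Rˣ) : R) - 1 ∈ k := by
  rw [algSubgroup, Subgroup.mem_subgroupOf]
  exact ⟨fun h => h.1, fun h => ⟨h, inv_sub_one_mem hJ k h⟩⟩

theorem mem_algSubgroup_iff_inv (hJ : IsNil J) (k : NonUnitalSubalgebra F R)
    (g : ↥(algGroup F R J)) :
    g ∈ algSubgroup k J ↔ ((gElt g⁻¹ : ↥J) : R) ∈ k := by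
  rw [← Subgroup.inv_mem_iff, mem_algSubgroup_iff hJ k g⁻¹]
  exact Iff.rfl

/-! #### The bilinear form -/

/-- The bilinear form `B(X,Y) = λ(XY)` on `J`. -/
def Bform (J : NonUnitalSubalgebra F R) (lam : ↥J →ₗ[F] F) : ↥J →ₗ[F] ↥J →ₗ[F] F :=
  LinearMap.mk₂ F (fun X Y => lam (X * Y))
    (fun X X' Y => by
      rw [← map_add]; exact congrArg lam (Subtype.ext (by push_cast; noncomm_ring)))
    (fun c X Y => by
      rw [← map_smul]
      exact congrArg lam (Subtype.ext (by push_cast [SetLike.val_smul]; rw [smul_mul_assoc])))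
    (fun X Y Y' => by
      rw [← map_add]; exact congrArg lam (Subtype.ext (by push_cast; noncomm_ring)))
    (fun c X Y => by
      rw [← map_smul]
      exact congrArg lam (Subtype.ext (by push_cast [SetLike.val_smul]; rw [mul_smul_comm])))

theorem Bform_apply (J : NonUnitalSubalgebra F R) (lam : ↥J →ₗ[F] F) (X Y : ↥J) :
    Bform J lam X Y = lam (X * Y) := rfl

theorem lamE_Bform (lam : ↥J →ₗ[F] F) (X Y : ↥J) :
    lamE J lam ((X : R) * (Y : R)) = Bform J lam X Y := by
  rw [lamE_apply J lam (mul_mem X.2 Y.2)]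
  exact congrArg lam (Subtype.ext rfl)

theorem mem_lone_iff (lam : ↥J →ₗ[F] F) (X : ↥J) :
    (X : R) ∈ lone J lam ↔ X ∈ LinearMap.ker (Bform J lam) := by
  rw [LinearMap.mem_ker]
  constructor
  · intro h
    ext Y
    rw [LinearMap.zero_apply, ← lamE_Bform lam X Y]
    exact h.2 (Y : R) Y.2
  · intro h
    refine ⟨X.2, fun y hy => ?_⟩
    rw [lamE_Bform lam X ⟨y, hy⟩, h, LinearMap.zero_apply]

theorem mem_sone_iff (lam : ↥J →ₗ[F] F) (X : ↥J) :
    (X : R) ∈ sone J lam ↔ ∀ Y ∈ LinearMap.ker (Bform J lam), Bform J lam X Y = 0 := by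
  constructor
  · rintro ⟨_, h⟩ Y hY
    rw [← lamE_Bform lam X Y]
    exact h (Y : R) ((mem_lone_iff lam Y).mpr hY)
  · intro h
    refine ⟨X.2, fun y hy => ?_⟩
    have hyJ : y ∈ J := lone_le J lam hy
    rw [lamE_Bform lam X ⟨y, hyJ⟩]
    exact h ⟨y, hyJ⟩ ((mem_lone_iff lam ⟨y, hyJ⟩).mp hy)

/-! #### Pointwise formulas for the actions -/

theorem leftAct_apply' (g : ↥(algGroup F R J)) (lam : ↥J →ₗ[F] F) (X : ↥J) :
    leftAct g lam X = lam X + Bform J lam (gElt g⁻¹) X := by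
  show lam (lmulMap g⁻¹ X) = lam X + lam (gElt g⁻¹ * X)
  rw [← map_add]
  refine congrArg lam (Subtype.ext ?_)
  show (((g⁻¹ : ↥(algGroup F R J)) : Rˣ) : R) * (X : R) =
    (X : R) + ((((g⁻¹ : ↥(algGroup F R J)) : Rˣ) : R) - 1) * (X : R)
  noncomm_ring

theorem rightAct_apply' (g : ↥(algGroup F R J)) (lam : ↥J →ₗ[F] F) (X : ↥J) :
    rightAct g lam X = lam X + Bform J lam X (gElt g⁻¹) := by
  show lam (rmulMap g⁻¹ X) = lam X + lam (X * gElt g⁻¹)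
  rw [← map_add]
  refine congrArg lam (Subtype.ext ?_)
  show (X : R) * (((g⁻¹ : ↥(algGroup F R J)) : Rˣ) : R) =
    (X : R) + (X : R) * ((((g⁻¹ : ↥(algGroup F R J)) : Rˣ) : R) - 1)
  noncomm_ring

theorem leftAct_one (lam : ↥J →ₗ[F] F) : leftAct (1 : ↥(algGroup F R J)) lam = lam := by
  ext X
  show lam (lmulMap (1 : ↥(algGroup F R J))⁻¹ X) = lam X
  refine congrArg lam (Subtype.ext ?_)
  show ((((1 : ↥(algGroup F R J))⁻¹ : ↥(algGroup F R J)) : Rˣ) : R) * (X : R) = (X : R)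
  simp

theorem rightAct_one (lam : ↥J →ₗ[F] F) : rightAct (1 : ↥(algGroup F R J)) lam = lam := by
  ext X
  show lam (rmulMap (1 : ↥(algGroup F R J))⁻¹ X) = lam X
  refine congrArg lam (Subtype.ext ?_)
  show (X : R) * ((((1 : ↥(algGroup F R J))⁻¹ : ↥(algGroup F R J)) : Rˣ) : R) = (X : R)
  simp

theorem leftAct_mul (g h : ↥(algGroup F R J)) (lam : ↥J →ₗ[F] F) :
    leftAct (g * h) lam = leftAct g (leftAct h lam) := by
  ext X
  show lam (lmulMap (g * h)⁻¹ X) = lam (lmulMap h⁻¹ (lmulMap g⁻¹ X))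
  refine congrArg lam (Subtype.ext ?_)
  show ((((g * h)⁻¹ : ↥(algGroup F R J)) : Rˣ) : R) * (X : R) =
    (((h⁻¹ : ↥(algGroup F R J)) : Rˣ) : R) *
      ((((g⁻¹ : ↥(algGroup F R J)) : Rˣ) : R) * (X : R))
  rw [mul_inv_rev]
  push_cast
  rw [mul_assoc]

theorem rightAct_mul (g h : ↥(algGroup F R J)) (lam : ↥J →ₗ[F] F) :
    rightAct (g * h) lam = rightAct h (rightAct g lam) := by
  ext X
  show lam (rmulMap (g * h)⁻¹ X) = lam (rmulMap g⁻¹ (rmulMap h⁻¹ X))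
  refine congrArg lam (Subtype.ext ?_)
  show (X : R) * ((((g * h)⁻¹ : ↥(algGroup F R J)) : Rˣ) : R) =
    ((X : R) * (((h⁻¹ : ↥(algGroup F R J)) : Rˣ) : R)) *
      (((g⁻¹ : ↥(algGroup F R J)) : Rˣ) : R)
  rw [mul_inv_rev]
  push_cast
  rw [mul_assoc]

theorem leftAct_rightAct_comm (g h : ↥(algGroup F R J)) (lam : ↥J →ₗ[F] F) :
    leftAct g (rightAct h lam) = rightAct h (leftAct g lam) := by
  ext X
  show lam (rmulMap h⁻¹ (lmulMap g⁻¹ X)) = lam (lmulMap g⁻¹ (rmulMap h⁻¹ X))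
  refine congrArg lam (Subtype.ext ?_)
  show ((((g⁻¹ : ↥(algGroup F R J)) : Rˣ) : R) * (X : R)) *
      (((h⁻¹ : ↥(algGroup F R J)) : Rˣ) : R) =
    (((g⁻¹ : ↥(algGroup F R J)) : Rˣ) : R) *
      ((X : R) * (((h⁻¹ : ↥(algGroup F R J)) : Rˣ) : R))
  rw [mul_assoc]

theorem leftAct_eq_lam_iff (g : ↥(algGroup F R J)) (lam : ↥J →ₗ[F] F) :
    leftAct g lam = lam ↔ Bform J lam (gElt g⁻¹) = 0 := by
  constructor
  · intro h
    ext X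
    have h1 := leftAct_apply' g lam X
    rw [h] at h1
    have h2 := h1.symm
    rw [LinearMap.zero_apply]
    exact add_left_cancel (h2.trans (add_zero (lam X)).symm)
  · intro h
    ext X
    rw [leftAct_apply' g lam X, h, LinearMap.zero_apply, add_zero]

theorem rightAct_eq_lam_iff (g : ↥(algGroup F R J)) (lam : ↥J →ₗ[F] F) :
    rightAct g lam = lam ↔ (Bform J lam).flip (gElt g⁻¹) = 0 := by
  constructor
  · intro h
    ext X
    have h1 := rightAct_apply' g lam X
    rw [h] at h1
    have h2 := h1.symm
    rw [LinearMap.zero_apply]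
    exact add_left_cancel (h2.trans (add_zero (lam X)).symm)
  · intro h
    ext X
    have h2 : Bform J lam X (gElt g⁻¹) = 0 := by
      have := congrArg (fun f : ↥J →ₗ[F] F => f X) h
      simpa using this
    rw [rightAct_apply' g lam X, h2, add_zero]

theorem leftAct_eq_rightAct_iff (g h : ↥(algGroup F R J)) (lam : ↥J →ₗ[F] F) :
    leftAct g lam = rightAct h lam ↔
      Bform J lam (gElt g⁻¹) = (Bform J lam).flip (gElt h⁻¹) := by
  constructor
  · intro h1
    ext X
    have h2 := congrArg (fun f : ↥J →ₗ[F] F => f X) h1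
    rw [leftAct_apply' g lam X, rightAct_apply' h lam X] at h2
    have h3 := add_left_cancel h2
    rw [h3]
    rfl
  · intro h1
    ext X
    rw [leftAct_apply' g lam X, rightAct_apply' h lam X]
    congr 1
    have h2 := congrArg (fun f : ↥J →ₗ[F] F => f X) h1
    simpa using h2

/-! #### Linear algebra: range of the flip -/

theorem flip_eq_dualMap (J : NonUnitalSubalgebra F R) (lam : ↥J →ₗ[F] F) :
    (Bform J lam).flip = (Bform J lam).dualMap.comp (Module.Dual.eval F ↥J) :=
  LinearMap.ext fun c => LinearMap.ext fun X => rfl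

theorem eval_range_top (J : NonUnitalSubalgebra F R) :
    LinearMap.range (Module.Dual.eval F ↥J) = ⊤ := by
  rw [LinearMap.range_eq_top]
  exact (Module.evalEquiv F ↥J).surjective

theorem range_flip_eq (J : NonUnitalSubalgebra F R) (lam : ↥J →ₗ[F] F) :
    LinearMap.range (Bform J lam).flip =
      (LinearMap.ker (Bform J lam)).dualAnnihilator := by
  rw [flip_eq_dualMap, LinearMap.range_comp_of_range_eq_top _ (eval_range_top J),
    LinearMap.range_dualMap_eq_dualAnnihilator_ker]

theorem card_ker_eq_card_ker_flip (J : NonUnitalSubalgebra F R) (lam : ↥J →ₗ[F] F) :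
    Nat.card ↥(LinearMap.ker (Bform J lam)) =
      Nat.card ↥(LinearMap.ker (Bform J lam).flip) := by
  have hr : Module.finrank F ↥(LinearMap.range (Bform J lam).flip) =
      Module.finrank F ↥(LinearMap.range (Bform J lam)) := by
    rw [flip_eq_dualMap, LinearMap.range_comp_of_range_eq_top _ (eval_range_top J)]
    exact LinearMap.finrank_range_dualMap_eq_finrank_range _
  have h1 := LinearMap.finrank_range_add_finrank_ker (Bform J lam)
  have h2 := LinearMap.finrank_range_add_finrank_ker (Bform J lam).flip
  have heq : Module.finrank F ↥(LinearMap.ker (Bform J lam)) =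
      Module.finrank F ↥(LinearMap.ker (Bform J lam).flip) := by omega
  haveI := Module.Free.of_divisionRing F ↥(LinearMap.ker (Bform J lam))
  haveI := Module.Free.of_divisionRing F ↥(LinearMap.ker (Bform J lam).flip)
  exact Nat.card_congr
    (FiniteDimensional.nonempty_linearEquiv_of_finrank_eq heq).some.toEquiv

/-! #### Stabilizer cardinalities -/

theorem card_fix_left (hJ : IsNil J) (lam : ↥J →ₗ[F] F) :
    Nat.card {g : ↥(algGroup F R J) // leftAct g lam = lam} =
      Nat.card ↥(LinearMap.ker (Bform J lam)) := by
  have e1 : {g : ↥(algGroup F R J) // leftAct g lam = lam} ≃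
      {g : ↥(algGroup F R J) // Bform J lam (gElt g⁻¹) = 0} :=
    Equiv.subtypeEquivRight fun g => leftAct_eq_lam_iff g lam
  have e2 : {g : ↥(algGroup F R J) // Bform J lam (gElt g⁻¹) = 0} ≃
      {g : ↥(algGroup F R J) // Bform J lam (gElt g) = 0} :=
    Equiv.subtypeEquiv (Equiv.inv ↥(algGroup F R J)) fun g => Iff.rfl
  have e3 : {g : ↥(algGroup F R J) // Bform J lam (gElt g) = 0} ≃
      {X : ↥J // Bform J lam X = 0} :=
    (equivJ hJ).subtypeEquiv fun g => Iff.rfl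
  have e4 : {X : ↥J // Bform J lam X = 0} ≃ ↥(LinearMap.ker (Bform J lam)) :=
    Equiv.subtypeEquivRight fun X => LinearMap.mem_ker.symm
  exact Nat.card_congr (((e1.trans e2).trans e3).trans e4)

theorem card_fix_right (hJ : IsNil J) (lam : ↥J →ₗ[F] F) :
    Nat.card {g : ↥(algGroup F R J) // rightAct g lam = lam} =
      Nat.card ↥(LinearMap.ker (Bform J lam).flip) := by
  have e1 : {g : ↥(algGroup F R J) // rightAct g lam = lam} ≃
      {g : ↥(algGroup F R J) // (Bform J lam).flip (gElt g⁻¹) = 0} :=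
    Equiv.subtypeEquivRight fun g => rightAct_eq_lam_iff g lam
  have e2 : {g : ↥(algGroup F R J) // (Bform J lam).flip (gElt g⁻¹) = 0} ≃
      {g : ↥(algGroup F R J) // (Bform J lam).flip (gElt g) = 0} :=
    Equiv.subtypeEquiv (Equiv.inv ↥(algGroup F R J)) fun g => Iff.rfl
  have e3 : {g : ↥(algGroup F R J) // (Bform J lam).flip (gElt g) = 0} ≃
      {X : ↥J // (Bform J lam).flip X = 0} :=
    (equivJ hJ).subtypeEquiv fun g => Iff.rfl
  have e4 : {X : ↥J // (Bform J lam).flip X = 0} ≃ ↥(LinearMap.ker (Bform J lam).flip) :=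
    Equiv.subtypeEquivRight fun X => LinearMap.mem_ker.symm
  exact Nat.card_congr (((e1.trans e2).trans e3).trans e4)

/-! #### Parts (1) and (2) -/

theorem part1 (hJ : IsNil J) (lam : ↥J →ₗ[F] F) (g : ↥(algGroup F R J)) :
    g ∈ Lgrp J lam ↔ leftAct g lam = lam := by
  show g ∈ algSubgroup (lone J lam) J ↔ _
  rw [mem_algSubgroup_iff_inv hJ, leftAct_eq_lam_iff g lam]
  exact mem_lone_iff lam (gElt g⁻¹)

theorem part2 (hJ : IsNil J) (lam : ↥J →ₗ[F] F) (g : ↥(algGroup F R J)) :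
    g ∈ Sgrp J lam ↔ leftAct g lam ∈ leftOrbit J lam ∩ rightOrbit J lam := by
  have hmemL : leftAct g lam ∈ leftOrbit J lam := ⟨g, rfl⟩
  have key : g ∈ Sgrp J lam ↔ leftAct g lam ∈ rightOrbit J lam := by
    show g ∈ algSubgroup (sone J lam) J ↔ _
    rw [mem_algSubgroup_iff_inv hJ, mem_sone_iff lam (gElt g⁻¹)]
    constructor
    · intro h
      have hmem : Bform J lam (gElt g⁻¹) ∈ (LinearMap.ker (Bform J lam)).dualAnnihilator :=
        (Submodule.mem_dualAnnihilator _).mpr h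
      rw [← range_flip_eq] at hmem
      obtain ⟨c, hc⟩ := hmem
      refine ⟨(mkG hJ c.2)⁻¹, ?_⟩
      have hge : gElt ((mkG hJ c.2)⁻¹)⁻¹ = c := by rw [inv_inv]; exact gElt_mkG hJ c.2
      exact ((leftAct_eq_rightAct_iff g _ lam).mpr (by rw [hge]; exact hc.symm)).symm
    · rintro ⟨h, hh⟩
      have h1 : Bform J lam (gElt g⁻¹) = (Bform J lam).flip (gElt h⁻¹) :=
        (leftAct_eq_rightAct_iff g h lam).mp hh.symm
      intro Y hY
      rw [h1]
      show Bform J lam Y (gElt h⁻¹) = 0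
      rw [LinearMap.mem_ker.mp hY, LinearMap.zero_apply]
  constructor
  · intro h; exact ⟨hmemL, key.mp h⟩
  · intro h; exact key.mpr h.2

/-! #### Counting lemmas -/

theorem count_lemma {G : Type} {W : Type} [Group G] [Finite G] (act : G → W → W)
    (hone : ∀ w, act 1 w = w) (hmul : ∀ g h w, act (g * h) w = act g (act h w))
    (x : W) (T : Set W) (hT : ∀ μ ∈ T, ∃ g, act g x = μ) :
    Nat.card {g : G // act g x ∈ T} =
      Nat.card ↥T * Nat.card {g : G // act g x = x} := by
  have hcancel : ∀ (g : G) (w : W), act g⁻¹ (act g w) = w := fun g w => by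
    rw [← hmul, inv_mul_cancel, hone]
  have hsel : ∀ t : ↥T, ∃ g, act g x = (t : W) := fun t => hT t t.2
  choose f hf using hsel
  have e : {g : G // act g x ∈ T} ≃ ↥T × {g : G // act g x = x} :=
    { toFun := fun g => (⟨act (g : G) x, g.2⟩,
        ⟨(f ⟨act (g : G) x, g.2⟩)⁻¹ * (g : G), by
          have hft : act (f ⟨act (g : G) x, g.2⟩) x = act (g : G) x := hf _
          rw [hmul]
          calc act (f ⟨act (g : G) x, g.2⟩)⁻¹ (act (g : G) x)
              = act (f ⟨act (g : G) x, g.2⟩)⁻¹ (act (f ⟨act (g : G) x, g.2⟩) x) := by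
                rw [hft]
            _ = x := hcancel _ _⟩)
      invFun := fun p => ⟨f p.1 * (p.2 : G), by
        rw [hmul, p.2.2, hf p.1]; exact p.1.2⟩
      left_inv := fun g => Subtype.ext (mul_inv_cancel_left _ _)
      right_inv := fun p => by
        obtain ⟨t, s⟩ := p
        have hx' : act (f t * (s : G)) x = (t : W) := by rw [hmul, s.2, hf t]
        have hgen : ∀ h' : act (f t * (s : G)) x ∈ T,
            (⟨act (f t * (s : G)) x, h'⟩ : ↥T) = t := fun h' => Subtype.ext hx'
        refine Prod.ext (hgen _) (Subtype.ext ?_)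
        show (f ⟨act (f t * (s : G)) x, _⟩)⁻¹ * (f t * (s : G)) = (s : G)
        rw [hgen, inv_mul_cancel_left] }
  rw [Nat.card_congr e, Nat.card_prod]

theorem count_lemma2 {G : Type} {W : Type} [Group G] [Finite G]
    (actL actR : G → W → W)
    (hLone : ∀ w, actL 1 w = w) (hLmul : ∀ g h w, actL (g * h) w = actL g (actL h w))
    (hRone : ∀ w, actR 1 w = w) (hRmul : ∀ g h w, actR (g * h) w = actR h (actR g w))
    (x : W) (T : Set W)
    (hmem : ∀ p : G × G, actL p.1 x = actR p.2 x → actL p.1 x ∈ T)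
    (hTL : ∀ μ ∈ T, ∃ g, actL g x = μ) (hTR : ∀ μ ∈ T, ∃ h, actR h x = μ) :
    Nat.card {p : G × G // actL p.1 x = actR p.2 x} =
      Nat.card ↥T * (Nat.card {g : G // actL g x = x} * Nat.card {g : G // actR g x = x}) := by
  have hLcancel : ∀ (g : G) (w : W), actL g⁻¹ (actL g w) = w := fun g w => by
    rw [← hLmul, inv_mul_cancel, hLone]
  have hRcancelL : ∀ (g : G) (w : W), actR g⁻¹ (actR g w) = w := fun g w => by
    rw [← hRmul, mul_inv_cancel, hRone]
  choose fL hfL using fun t : ↥T => hTL t t.2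
  choose fR hfR using fun t : ↥T => hTR t t.2
  have e : {p : G × G // actL p.1 x = actR p.2 x} ≃
      ↥T × ({g : G // actL g x = x} × {g : G // actR g x = x}) :=
    { toFun := fun p =>
        (⟨actL (p : G × G).1 x, hmem _ p.2⟩,
          (⟨(fL ⟨actL (p : G × G).1 x, hmem _ p.2⟩)⁻¹ * (p : G × G).1, by
              have hft : actL (fL ⟨actL (p : G × G).1 x, hmem _ p.2⟩) x =
                  actL (p : G × G).1 x := hfL _
              rw [hLmul]
              calc actL (fL ⟨actL (p : G × G).1 x, hmem _ p.2⟩)⁻¹ (actL (p : G × G).1 x)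
                  = actL (fL ⟨actL (p : G × G).1 x, hmem _ p.2⟩)⁻¹
                      (actL (fL ⟨actL (p : G × G).1 x, hmem _ p.2⟩) x) := by rw [hft]
                _ = x := hLcancel _ _⟩,
            ⟨(p : G × G).2 * (fR ⟨actL (p : G × G).1 x, hmem _ p.2⟩)⁻¹, by
              have hft : actR (fR ⟨actL (p : G × G).1 x, hmem _ p.2⟩) x =
                  actL (p : G × G).1 x := hfR _
              rw [hRmul, ← p.2]
              calc actR (fR ⟨actL (p : G × G).1 x, hmem _ p.2⟩)⁻¹ (actL (p : G × G).1 x)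
                  = actR (fR ⟨actL (p : G × G).1 x, hmem _ p.2⟩)⁻¹
                      (actR (fR ⟨actL (p : G × G).1 x, hmem _ p.2⟩) x) := by rw [hft]
                _ = x := hRcancelL _ _⟩))
      invFun := fun q =>
        ⟨(fL q.1 * (q.2.1 : G), (q.2.2 : G) * fR q.1), by
          show actL (fL q.1 * (q.2.1 : G)) x = actR ((q.2.2 : G) * fR q.1) x
          rw [hLmul, q.2.1.2, hfL q.1, hRmul, q.2.2.2, hfR q.1]⟩
      left_inv := fun p => Subtype.ext (Prod.ext (mul_inv_cancel_left _ _) (inv_mul_cancel_right _ _))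
      right_inv := fun q => by
        obtain ⟨t, s, r⟩ := q
        have hx' : actL (fL t * (s : G)) x = (t : W) := by rw [hLmul, s.2, hfL t]
        have hgen : ∀ h' : actL (fL t * (s : G)) x ∈ T,
            (⟨actL (fL t * (s : G)) x, h'⟩ : ↥T) = t := fun h' => Subtype.ext hx'
        refine Prod.ext (hgen _) (Prod.ext (Subtype.ext ?_) (Subtype.ext ?_))
        · show (fL ⟨actL (fL t * (s : G)) x, _⟩)⁻¹ * (fL t * (s : G)) = (s : G)
          rw [hgen, inv_mul_cancel_left]
        · show ((r : G) * fR t) * (fR ⟨actL (fL t * (s : G)) x, _⟩)⁻¹ = (r : G)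
          rw [hgen, mul_inv_cancel_right] }
  rw [Nat.card_congr e, Nat.card_prod, Nat.card_prod]

/-! #### Orthogonality of the functions `θ_μ` -/

theorem theta_mul_conj (θ : AddChar F ℂ) (μ ν : ↥J →ₗ[F] F)
    (g : ↥(algGroup F R J)) :
    thetaFn θ J μ g * (starRingEnd ℂ) (thetaFn θ J ν g) = θ ((μ - ν) (gElt g)) := by
  rw [thetaFn, thetaFn, ← AddChar.map_neg_eq_conj, ← AddChar.map_add_eq_mul]
  congr 1
  rw [LinearMap.sub_apply]
  ring

theorem theta_orth (hJ : IsNil J) (θ : AddChar F ℂ) (hθ : θ ≠ 1)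
    (μ ν : ↥J →ₗ[F] F) [Fintype ↥(algGroup F R J)] :
    ∑ g : ↥(algGroup F R J), thetaFn θ J μ g * (starRingEnd ℂ) (thetaFn θ J ν g) =
      @ite ℂ (μ = ν) (Classical.propDecidable _) (Nat.card ↥(algGroup F R J) : ℂ) 0 := by
  haveI : Fintype ↥J := Fintype.ofFinite _
  simp only [theta_mul_conj θ μ ν]
  have h2 : ∑ g : ↥(algGroup F R J), θ ((μ - ν) (gElt g)) = ∑ X : ↥J, θ ((μ - ν) X) :=
    Fintype.sum_equiv (equivJ hJ) _ _ (fun g => rfl)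
  rw [h2]
  by_cases h : μ = ν
  · subst h
    simp only [sub_self, LinearMap.zero_apply, AddChar.map_zero_eq_one]
    rw [Finset.sum_const, Finset.card_univ, nsmul_eq_mul, mul_one,
      Nat.card_congr (equivJ hJ), Nat.card_eq_fintype_card]
    simp
  · rw [if_neg h]
    have hne : μ - ν ≠ 0 := sub_ne_zero.mpr h
    obtain ⟨X0, hX0⟩ : ∃ X0 : ↥J, (μ - ν) X0 ≠ 0 := by
      by_contra hc
      push_neg at hc
      exact hne (LinearMap.ext fun X => hc X)
    obtain ⟨a, ha⟩ := AddChar.ne_one_iff.mp hθ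
    have hpsi : (θ.compAddMonoidHom (μ - ν).toAddMonoidHom : AddChar ↥J ℂ) ≠ 0 := by
      rw [AddChar.ne_zero_iff]
      refine ⟨(((μ - ν) X0)⁻¹ * a) • X0, ?_⟩
      show θ ((μ - ν) ((((μ - ν) X0)⁻¹ * a) • X0)) ≠ 1
      rw [map_smul, smul_eq_mul, mul_assoc, mul_comm a, inv_mul_cancel_left₀ hX0]
      exact ha
    calc ∑ X : ↥J, θ ((μ - ν) X)
        = ∑ X : ↥J, (θ.compAddMonoidHom (μ - ν).toAddMonoidHom : AddChar ↥J ℂ) X :=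
          Finset.sum_congr rfl fun X _ => rfl
      _ = 0 := AddChar.sum_eq_zero_iff_ne_zero.mpr hpsi

/-! #### Inner product of a scaled sum of orthogonal functions -/

theorem innerG_eval {G : Type} [Group G] [Fintype G] {W : Type} (s : Finset W)
    (f : W → G → ℂ) (c : ℂ) (hcc : (starRingEnd ℂ) c = c)
    (horth : ∀ μ ∈ s, ∀ ν ∈ s, ∑ g : G, f μ g * (starRingEnd ℂ) (f ν g) =
      if μ = ν then (Nat.card G : ℂ) else 0) :
    innerG G (fun g => c * ∑ μ ∈ s, f μ g) (fun g => c * ∑ μ ∈ s, f μ g) =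
      c ^ 2 * s.card := by
  rw [innerG, finsum_eq_sum_of_fintype]
  have expand : ∀ g : G, (c * ∑ μ ∈ s, f μ g) * (starRingEnd ℂ) (c * ∑ μ ∈ s, f μ g) =
      c ^ 2 * ∑ μ ∈ s, ∑ ν ∈ s, f μ g * (starRingEnd ℂ) (f ν g) := by
    intro g
    rw [map_mul, hcc, map_sum]
    rw [show (c * ∑ μ ∈ s, f μ g) * (c * ∑ μ ∈ s, (starRingEnd ℂ) (f μ g)) =
        c ^ 2 * ((∑ μ ∈ s, f μ g) * ∑ ν ∈ s, (starRingEnd ℂ) (f ν g)) from by ring]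
    rw [Finset.sum_mul_sum]
  rw [Finset.sum_congr rfl fun g _ => expand g, ← Finset.mul_sum]
  have key : ∑ g : G, ∑ μ ∈ s, ∑ ν ∈ s, f μ g * (starRingEnd ℂ) (f ν g) =
      (s.card : ℂ) * Nat.card G := by
    calc ∑ g : G, ∑ μ ∈ s, ∑ ν ∈ s, f μ g * (starRingEnd ℂ) (f ν g)
        = ∑ μ ∈ s, ∑ g : G, ∑ ν ∈ s, f μ g * (starRingEnd ℂ) (f ν g) := Finset.sum_comm
      _ = ∑ μ ∈ s, ∑ ν ∈ s, ∑ g : G, f μ g * (starRingEnd ℂ) (f ν g) :=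
          Finset.sum_congr rfl fun μ _ => Finset.sum_comm
      _ = ∑ μ ∈ s, ∑ ν ∈ s, if μ = ν then (Nat.card G : ℂ) else 0 :=
          Finset.sum_congr rfl fun μ hμ => Finset.sum_congr rfl fun ν hν => horth μ hμ ν hν
      _ = ∑ μ ∈ s, (Nat.card G : ℂ) := Finset.sum_congr rfl fun μ hμ => by
            rw [Finset.sum_ite_eq s μ (fun _ => (Nat.card G : ℂ)), if_pos hμ]
      _ = (s.card : ℂ) * Nat.card G := by rw [Finset.sum_const, nsmul_eq_mul]
  rw [key]
  have hn : (Nat.card G : ℂ) ≠ 0 := Nat.cast_ne_zero.mpr Nat.card_pos.ne'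
  field_simp

/-! #### The combinatorial identity `|Gλ|² = |GλG| · |Gλ ∩ λG|` -/

theorem comb (hJ : IsNil J) (lam : ↥J →ₗ[F] F) :
    Nat.card ↥(leftOrbit J lam) * Nat.card ↥(leftOrbit J lam) =
      Nat.card ↥(twoOrbit J lam) * Nat.card ↥(leftOrbit J lam ∩ rightOrbit J lam) := by
  classical
  haveI : Finite (↥J →ₗ[F] F) := Finite.of_injective _ DFunLike.coe_injective
  set a := Nat.card ↥(leftOrbit J lam) with ha
  set b := Nat.card ↥(rightOrbit J lam) with hb
  set o := Nat.card ↥(twoOrbit J lam) with hov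
  set t := Nat.card ↥(leftOrbit J lam ∩ rightOrbit J lam) with ht
  set l := Nat.card {g : ↥(algGroup F R J) // leftAct g lam = lam} with hl
  set r := Nat.card {g : ↥(algGroup F R J) // rightAct g lam = lam} with hr
  have hi : Nat.card ↥(algGroup F R J) = a * l := by
    have h := count_lemma leftAct (fun w => leftAct_one w)
      (fun g h w => leftAct_mul g h w) lam (leftOrbit J lam) (fun μ hμ => hμ)
    rw [← h]
    exact (Nat.card_congr (Equiv.subtypeUnivEquiv fun g => ⟨g, rfl⟩)).symm
  have hii : Nat.card ↥(algGroup F R J) = b * r := by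
    have h := count_lemma (fun (g : ↥(algGroup F R J)) μ => rightAct g⁻¹ μ)
      (fun w => by
        show rightAct (1 : ↥(algGroup F R J))⁻¹ w = w
        rw [inv_one, rightAct_one])
      (fun g h w => by
        show rightAct (g * h)⁻¹ w = rightAct g⁻¹ (rightAct h⁻¹ w)
        rw [mul_inv_rev, rightAct_mul])
      lam (rightOrbit J lam)
      (fun μ hμ => by
        obtain ⟨h0, hh0⟩ := hμ
        refine ⟨h0⁻¹, ?_⟩
        show rightAct h0⁻¹⁻¹ lam = μ
        rw [inv_inv]
        exact hh0)
    have h' : Nat.card {g : ↥(algGroup F R J) // rightAct g⁻¹ lam ∈ rightOrbit J lam} =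
        Nat.card ↥(rightOrbit J lam) *
          Nat.card {g : ↥(algGroup F R J) // rightAct g⁻¹ lam = lam} := h
    have e2 : {g : ↥(algGroup F R J) // rightAct g⁻¹ lam = lam} ≃
        {g : ↥(algGroup F R J) // rightAct g lam = lam} :=
      ((Equiv.inv ↥(algGroup F R J)).subtypeEquiv fun g => Iff.rfl).symm
    rw [hb, hr, ← Nat.card_congr e2, ← h']
    exact (Nat.card_congr (Equiv.subtypeUnivEquiv fun g => ⟨g⁻¹, rfl⟩)).symm
  have hstab : ∀ p : ↥(algGroup F R J) × ↥(algGroup F R J),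
      leftAct p.1 (rightAct p.2⁻¹ lam) = lam ↔ leftAct p.1 lam = rightAct p.2 lam := by
    rintro ⟨g, h⟩
    constructor
    · intro hq
      have h2 : rightAct h (leftAct g (rightAct h⁻¹ lam)) = rightAct h lam := by rw [hq]
      rwa [← leftAct_rightAct_comm, ← rightAct_mul, inv_mul_cancel, rightAct_one] at h2
    · intro hq
      show leftAct g (rightAct h⁻¹ lam) = lam
      rw [leftAct_rightAct_comm, hq, ← rightAct_mul, mul_inv_cancel, rightAct_one]
  have hiii : Nat.card ↥(algGroup F R J) * Nat.card ↥(algGroup F R J) =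
      o * Nat.card {p : ↥(algGroup F R J) × ↥(algGroup F R J) //
        leftAct p.1 lam = rightAct p.2 lam} := by
    have h := count_lemma
      (fun (p : ↥(algGroup F R J) × ↥(algGroup F R J)) μ => leftAct p.1 (rightAct p.2⁻¹ μ))
      (fun w => by show leftAct 1 (rightAct (1 : ↥(algGroup F R J))⁻¹ w) = w
                   rw [inv_one, rightAct_one, leftAct_one])
      (fun p q w => by
        show leftAct (p.1 * q.1) (rightAct (p.2 * q.2)⁻¹ w) =
          leftAct p.1 (rightAct p.2⁻¹ (leftAct q.1 (rightAct q.2⁻¹ w)))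
        rw [mul_inv_rev, rightAct_mul, leftAct_mul, leftAct_rightAct_comm])
      lam (twoOrbit J lam)
      (fun μ hμ => by
        obtain ⟨g, h0, hμ0⟩ := hμ
        refine ⟨(g, h0⁻¹), ?_⟩
        show leftAct g (rightAct h0⁻¹⁻¹ lam) = μ
        rw [inv_inv]
        exact hμ0.symm)
    have e1 : {p : ↥(algGroup F R J) × ↥(algGroup F R J) //
        leftAct p.1 (rightAct p.2⁻¹ lam) ∈ twoOrbit J lam} ≃
        ↥(algGroup F R J) × ↥(algGroup F R J) :=
      Equiv.subtypeUnivEquiv fun p => ⟨p.1, p.2⁻¹, rfl⟩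
    have e2 : {p : ↥(algGroup F R J) × ↥(algGroup F R J) //
        leftAct p.1 (rightAct p.2⁻¹ lam) = lam} ≃
        {p : ↥(algGroup F R J) × ↥(algGroup F R J) //
          leftAct p.1 lam = rightAct p.2 lam} :=
      Equiv.subtypeEquivRight hstab
    have h' : Nat.card {p : ↥(algGroup F R J) × ↥(algGroup F R J) //
          leftAct p.1 (rightAct p.2⁻¹ lam) ∈ twoOrbit J lam} =
        Nat.card ↥(twoOrbit J lam) *
          Nat.card {p : ↥(algGroup F R J) × ↥(algGroup F R J) //
            leftAct p.1 (rightAct p.2⁻¹ lam) = lam} := h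
    rw [hov, ← Nat.card_prod, ← Nat.card_congr e1, h', Nat.card_congr e2]
  have hiv : Nat.card {p : ↥(algGroup F R J) × ↥(algGroup F R J) //
      leftAct p.1 lam = rightAct p.2 lam} = t * (l * r) := by
    refine count_lemma2 leftAct rightAct (fun w => leftAct_one w)
      (fun g h w => leftAct_mul g h w) (fun w => rightAct_one w)
      (fun g h w => rightAct_mul g h w) lam
      (leftOrbit J lam ∩ rightOrbit J lam) ?_ ?_ ?_
    · rintro ⟨g, h⟩ heq
      exact ⟨⟨g, rfl⟩, ⟨h, heq.symm⟩⟩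
    · rintro μ ⟨hμ1, hμ2⟩
      obtain ⟨g, hg⟩ := hμ1
      exact ⟨g, hg⟩
    · rintro μ ⟨hμ1, hμ2⟩
      obtain ⟨h0, hh0⟩ := hμ2
      exact ⟨h0, hh0⟩
  have hlr : l = r := by
    rw [hl, hr, card_fix_left hJ lam, card_fix_right hJ lam,
      card_ker_eq_card_ker_flip J lam]
  haveI : Nonempty {g : ↥(algGroup F R J) // leftAct g lam = lam} :=
    ⟨⟨1, leftAct_one lam⟩⟩
  haveI : Nonempty {g : ↥(algGroup F R J) // rightAct g lam = lam} :=
    ⟨⟨1, rightAct_one lam⟩⟩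
  have hl0 : 0 < l := Nat.card_pos
  have hr0 : 0 < r := Nat.card_pos
  have hab : a = b := by
    have h3 : a * l = b * l := by
      rw [← hi]
      rw [hlr]
      exact hii
    exact Nat.eq_of_mul_eq_mul_right hl0 h3
  have key : (a * b) * (l * r) = (o * t) * (l * r) := by
    calc (a * b) * (l * r) = (a * l) * (b * r) := by ring
      _ = Nat.card ↥(algGroup F R J) * Nat.card ↥(algGroup F R J) := by rw [← hi, ← hii]
      _ = o * (t * (l * r)) := by rw [hiii, hiv]
      _ = (o * t) * (l * r) := by ring
  have h2 : a * b = o * t :=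
    Nat.eq_of_mul_eq_mul_right (Nat.mul_pos hl0 hr0) key
  calc a * a = a * b := by rw [hab]
    _ = o * t := h2

/-! #### Assembly -/

theorem part3 (hJ : IsNil J) (lam : ↥J →ₗ[F] F) :
    (Nat.card ↥(Sgrp J lam) : ℂ) / (Nat.card ↥(Lgrp J lam) : ℂ) =
      (Nat.card ↥(leftOrbit J lam ∩ rightOrbit J lam) : ℂ) := by
  classical
  haveI : Finite (↥J →ₗ[F] F) := Finite.of_injective _ DFunLike.coe_injective
  have h := count_lemma leftAct (fun w => leftAct_one w)
    (fun g h w => leftAct_mul g h w) lam (leftOrbit J lam ∩ rightOrbit J lam)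
    (fun μ hμ => by obtain ⟨g, hg⟩ := hμ.1; exact ⟨g, hg⟩)
  have hS : Nat.card ↥(Sgrp J lam) =
      Nat.card {g : ↥(algGroup F R J) //
        leftAct g lam ∈ leftOrbit J lam ∩ rightOrbit J lam} :=
    Nat.card_congr (Equiv.subtypeEquivRight fun g => part2 hJ lam g)
  have hL : Nat.card ↥(Lgrp J lam) =
      Nat.card {g : ↥(algGroup F R J) // leftAct g lam = lam} :=
    Nat.card_congr (Equiv.subtypeEquivRight fun g => part1 hJ lam g)
  haveI : Nonempty {g : ↥(algGroup F R J) // leftAct g lam = lam} :=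
    ⟨⟨1, leftAct_one lam⟩⟩
  have hL0 : (Nat.card {g : ↥(algGroup F R J) // leftAct g lam = lam} : ℂ) ≠ 0 :=
    Nat.cast_ne_zero.mpr Nat.card_pos.ne'
  rw [hS, hL, h]
  push_cast
  rw [mul_div_assoc, div_self hL0, mul_one]

theorem part4 (hJ : IsNil J) (θ : AddChar F ℂ) (hθ : θ ≠ 1) (lam : ↥J →ₗ[F] F) :
    innerG ↥(algGroup F R J) (superchar θ J lam) (superchar θ J lam) =
      (Nat.card ↥(leftOrbit J lam ∩ rightOrbit J lam) : ℂ) := by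
  classical
  haveI : Fintype ↥(algGroup F R J) := Fintype.ofFinite _
  haveI : Finite (↥J →ₗ[F] F) := Finite.of_injective _ DFunLike.coe_injective
  have hO : (twoOrbit J lam).Finite := Set.toFinite _
  have hform : superchar θ J lam = fun g =>
      ((Nat.card ↥(leftOrbit J lam) : ℂ) / (Nat.card ↥(twoOrbit J lam) : ℂ)) *
        ∑ mu ∈ hO.toFinset, thetaFn θ J mu g := by
    funext g
    show ((Nat.card ↥(leftOrbit J lam) : ℂ) / (Nat.card ↥(twoOrbit J lam) : ℂ)) *
        ∑ᶠ mu ∈ twoOrbit J lam, thetaFn θ J mu g = _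
    congr 1
    exact finsum_mem_eq_finite_toFinset_sum _ hO
  have hconj : (starRingEnd ℂ)
      ((Nat.card ↥(leftOrbit J lam) : ℂ) / (Nat.card ↥(twoOrbit J lam) : ℂ)) =
      (Nat.card ↥(leftOrbit J lam) : ℂ) / (Nat.card ↥(twoOrbit J lam) : ℂ) := by
    rw [map_div₀, map_natCast, map_natCast]
  rw [hform, innerG_eval hO.toFinset (fun mu g => thetaFn θ J mu g) _ hconj
    (fun μ _ ν _ => theta_orth hJ θ hθ μ ν)]
  have hcard : (hO.toFinset.card : ℂ) = (Nat.card ↥(twoOrbit J lam) : ℂ) := by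
    norm_cast
    rw [Nat.card_coe_set_eq, Set.ncard_eq_toFinset_card _ hO]
  haveI : Nonempty ↥(twoOrbit J lam) :=
    ⟨⟨lam, 1, 1, by rw [rightAct_one, leftAct_one]⟩⟩
  have ho : (Nat.card ↥(twoOrbit J lam) : ℂ) ≠ 0 :=
    Nat.cast_ne_zero.mpr Nat.card_pos.ne'
  have hcomb := comb hJ lam
  have hcast : (Nat.card ↥(leftOrbit J lam) : ℂ) * (Nat.card ↥(leftOrbit J lam) : ℂ) =
      (Nat.card ↥(twoOrbit J lam) : ℂ) *
        (Nat.card ↥(leftOrbit J lam ∩ rightOrbit J lam) : ℂ) := by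
    exact_mod_cast congrArg (Nat.cast : ℕ → ℂ) hcomb
  rw [hcard]
  field_simp
  linear_combination hcast

end ProofAux

theorem statement0 (F : Type) [Field F] [Fintype F]
    (R : Type) [Ring R] [Algebra F R] [Fintype R]
    (J : NonUnitalSubalgebra F R) (hJ : IsNil J)
    (θ : AddChar F ℂ) (hθ : θ ≠ 1)
    (lam : ↥J →ₗ[F] F) :
    (∀ g : ↥(algGroup F R J), g ∈ Lgrp J lam ↔ leftAct g lam = lam) ∧
    (∀ g : ↥(algGroup F R J), g ∈ Sgrp J lam ↔
      leftAct g lam ∈ leftOrbit J lam ∩ rightOrbit J lam) ∧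
    (Nat.card ↥(Sgrp J lam) : ℂ) / (Nat.card ↥(Lgrp J lam) : ℂ) =
      (Nat.card ↥(leftOrbit J lam ∩ rightOrbit J lam) : ℂ) ∧
    innerG ↥(algGroup F R J) (superchar θ J lam) (superchar θ J lam) =
      (Nat.card ↥(leftOrbit J lam ∩ rightOrbit J lam) : ℂ) := by
    refine ⟨fun g => part1 hJ lam g, fun g => part2 hJ lam g, part3 hJ lam, part4 hJ θ hθ lam⟩

end IterChar
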